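/- Let n = 2k ≥ 2 be even and let f be a local antimagic labeling of the triangular bracelet TB(n) such that f⁺(v) = 20k+12 for every degree-4 vertex v and f⁺(v) ∈ {9k+6, 21k+12} for every degree-3 vertex v, with exactly n+1 degree-3 vertices receiving each of these two values. For i = 1, 2, let U_i be the set of the n+1 degree-3 vertices with induced label 9k+6 (for i = 1) respectively 21k+12 (for i = 2). Suppose n+1 = r_i s_i with r_i, s_i ≥ 3 both odd, and let P_i be a partition of U_i into r_i blocks of size s_i such that no two vertices in the same block are adjacent or have a common neighbor. Then the graph TB^i(r_i, n) obtained from TB(n) by merging each block of P_i into a single vertex satisfies χ_la(TB^i(r_i, n)) = 3. -/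

import Mathlib

namespace LocalAntimagic

variable {V W : Type*}

/-- Induced vertex label: sum of edge labels over edges incident to `v`. -/
noncomputable def fplus (G : SimpleGraph V) (f : Sym2 V → ℕ) (v : V) : ℕ :=
  ∑ᶠ e ∈ G.incidenceSet v, f e

/-- `f` is a local antimagic labeling of `G`: a bijection from the edge set onto
`{1, …, q}` (`q` the number of edges) whose induced vertex labels distinguish
adjacent vertices. -/
def IsLocalAntimagic (G : SimpleGraph V) (f : Sym2 V → ℕ) : Prop :=
  Set.BijOn f G.edgeSet (Set.Icc 1 G.edgeSet.ncard) ∧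
  ∀ ⦃u w : V⦄, G.Adj u w → fplus G f u ≠ fplus G f w

/-- The local antimagic chromatic number: the least number of distinct induced
vertex labels over all local antimagic labelings. -/
noncomputable def chiLA (G : SimpleGraph V) : ℕ :=
  sInf {c : ℕ | ∃ f : Sym2 V → ℕ, IsLocalAntimagic G f ∧ (Set.range (fplus G f)).ncard = c}

/-- `n` disjoint copies of the path `P₃`; in copy `i`, vertex `(i,0) = uᵢ`,
`(i,1) = wᵢ`, `(i,2) = vᵢ`. -/
def nP3 (n : ℕ) : SimpleGraph (Fin n × Fin 3) :=
  SimpleGraph.fromRel (fun x y => x.1 = y.1 ∧ ((x.2 = 0 ∧ y.2 = 1) ∨ (x.2 = 1 ∧ y.2 = 2)))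

/-- Join of two graphs on disjoint vertex sets. -/
def joinG {α β : Type*} (G : SimpleGraph α) (H : SimpleGraph β) : SimpleGraph (α ⊕ β) :=
  SimpleGraph.fromRel (fun x y =>
    match x, y with
    | Sum.inl a, Sum.inl b => G.Adj a b
    | Sum.inr a, Sum.inr b => H.Adj a b
    | Sum.inl _, Sum.inr _ => True
    | Sum.inr _, Sum.inl _ => False)

/-- Disjoint union of two graphs. -/
def disjUnionG {α β : Type*} (G : SimpleGraph α) (H : SimpleGraph β) : SimpleGraph (α ⊕ β) :=
  SimpleGraph.fromRel (fun x y =>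
    match x, y with
    | Sum.inl a, Sum.inl b => G.Adj a b
    | Sum.inr a, Sum.inr b => H.Adj a b
    | _, _ => False)

/-- `m` disjoint copies of `G`. -/
def copies (m : ℕ) (G : SimpleGraph V) : SimpleGraph (Fin m × V) :=
  SimpleGraph.fromRel (fun x y => x.1 = y.1 ∧ G.Adj x.2 y.2)

/-- The fan blade graph `FB(n) = nP₃ ∨ O₁`. -/
def FB (n : ℕ) : SimpleGraph ((Fin n × Fin 3) ⊕ Fin 1) :=
  joinG (nP3 n) ⊥

/-- The graph obtained from `G` by merging vertices according to `p` (fibers of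
`p` are merged into single vertices). -/
def mergeMap (G : SimpleGraph V) (p : V → W) : SimpleGraph W :=
  SimpleGraph.fromRel (fun a b => ∃ x y, G.Adj x y ∧ p x = a ∧ p y = b)

/-- No two distinct vertices of `S` are adjacent or share a common neighbor. -/
def NoCommon (G : SimpleGraph V) (S : Set V) : Prop :=
  ∀ x ∈ S, ∀ y ∈ S, x ≠ y → ¬ G.Adj x y ∧ ∀ z, ¬ (G.Adj x z ∧ G.Adj y z)

/-- `P` is a partition of the set `S` into nonempty blocks. -/
def IsPartitionOn (S : Set V) (P : Set (Set V)) : Prop :=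
  (∀ B ∈ P, B ⊆ S) ∧ (∀ v ∈ S, ∃! B, B ∈ P ∧ v ∈ B) ∧ ∀ B ∈ P, B.Nonempty

/-- `p` identifies exactly the vertices lying in a common block of `P`,
and nothing else; `p` is surjective so the codomain is exactly the merged
vertex set. -/
def IsMergeOf (P : Set (Set V)) (p : V → W) : Prop :=
  Function.Surjective p ∧ ∀ x y : V, p x = p y ↔ (x = y ∨ ∃ B ∈ P, x ∈ B ∧ y ∈ B)


/-- The diamond fan `DF(2s)`: two copies (`c = 0,1`) of `sP₃`, plus two hub
vertices `y = Sum.inr 0` and `z = Sum.inr 1`; in copy `c`, blade `j`, position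
`0,2` are the degree-1 endpoints and `1` the middle vertex of the path. -/
def DF2 (s : ℕ) : SimpleGraph ((Fin 2 × Fin s × Fin 3) ⊕ Fin 2) :=
  SimpleGraph.fromRel (fun x y =>
    match x, y with
    | Sum.inl a, Sum.inl b =>
        a.1 = b.1 ∧ a.2.1 = b.2.1 ∧ ((a.2.2 = 0 ∧ b.2.2 = 1) ∨ (a.2.2 = 1 ∧ b.2.2 = 2))
    | Sum.inl a, Sum.inr j =>
        (j = 0 ∧ ((a.1 = 0 ∧ a.2.2 ≠ 1) ∨ (a.1 = 1 ∧ a.2.2 = 1))) ∨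
        (j = 1 ∧ ((a.1 = 1 ∧ a.2.2 ≠ 1) ∨ (a.1 = 0 ∧ a.2.2 = 1)))
    | _, _ => False)

abbrev DFVert (r s : ℕ) :=
  (Fin r × ((Fin 2 × Fin s × Fin 3) ⊕ Fin 2)) ⊕ ((Fin s × Fin 3) ⊕ Fin 1)

/-- Peanut graph `Pt(n)`: `Sum.inl (i, 0) = u_{i+1}`, `Sum.inl (i, 1) = v_{i+1}`
for `0 ≤ i ≤ 2n`, and `Sum.inr 0 = x`, `Sum.inr 1 = y`. -/
abbrev PtVert (n : ℕ) := (Fin (2*n+1) × Fin 2) ⊕ Fin 2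

def Pt (n : ℕ) : SimpleGraph (PtVert n) :=
  SimpleGraph.fromRel (fun a b =>
    match a, b with
    | Sum.inl p, Sum.inl q =>
        (p.2 = q.2 ∧ (p.1 : ℕ) + 1 = (q.1 : ℕ)) ∨
        (p.1 = q.1 ∧ (p.1 : ℕ) % 2 = 0 ∧ p.2 = 0 ∧ q.2 = 1)
    | Sum.inr j, Sum.inl p => (j = 0 ∧ (p.1 : ℕ) = 0) ∨ (j = 1 ∧ (p.1 : ℕ) = 2*n)
    | _, _ => False)

/-- Triangular bracelet `TB(n)`: `Sum.inl (j, 0) = u_{2j+1}`,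
`Sum.inl (j, 1) = v_{2j+1}` for `0 ≤ j ≤ n`, and `Sum.inr j = z_{2j}`. -/
abbrev TBVert (n : ℕ) := (Fin (n+1) × Fin 2) ⊕ Fin (n+1)

def TB (n : ℕ) : SimpleGraph (TBVert n) :=
  SimpleGraph.fromRel (fun a b =>
    match a, b with
    | Sum.inl p, Sum.inl q => p.1 = q.1 ∧ p.2 = 0 ∧ q.2 = 1
    | Sum.inr j, Sum.inl p =>
        (p.1 : ℕ) = (j : ℕ) ∨ (p.1 : ℕ) + 1 = (j : ℕ) ∨ ((j : ℕ) = 0 ∧ (p.1 : ℕ) = n)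
    | _, _ => False)

/-- Disjoint union of an indexed family of graphs. -/
def sigmaG {ι : Type*} {Vf : ι → Type*} (G : ∀ a, SimpleGraph (Vf a)) :
    SimpleGraph (Σ a, Vf a) :=
  SimpleGraph.fromRel (fun x y =>
    ∃ h : x.1 = y.1, (G y.1).Adj (cast (congrArg Vf h) x.2) y.2)

/-- `FB¹(r,s)`: `Sum.inl (i,j) = w_{i,j}`, `Sum.inr (Sum.inl i) = xᵢ`,
`Sum.inr (Sum.inr (j,0)) = uⱼ`, `Sum.inr (Sum.inr (j,1)) = vⱼ`. -/
def FB1 (r s : ℕ) : SimpleGraph ((Fin r × Fin s) ⊕ (Fin r ⊕ (Fin s × Fin 2))) :=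
  SimpleGraph.fromRel (fun a b =>
    match a, b with
    | Sum.inl w, Sum.inr (Sum.inl x) => w.1 = x
    | Sum.inl w, Sum.inr (Sum.inr uv) => w.2 = uv.1
    | Sum.inr (Sum.inl _), Sum.inr (Sum.inr _) => True
    | _, _ => False)

/-- `FB²(r,s)`: `Sum.inl (i,j,0) = u_{i,j}`, `Sum.inl (i,j,1) = v_{i,j}`,
`Sum.inr (Sum.inl i) = xᵢ`, `Sum.inr (Sum.inr j) = wⱼ`. -/
def FB2 (r s : ℕ) : SimpleGraph ((Fin r × Fin s × Fin 2) ⊕ (Fin r ⊕ Fin s)) :=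
  SimpleGraph.fromRel (fun a b =>
    match a, b with
    | Sum.inl uv, Sum.inr (Sum.inl x) => uv.1 = x
    | Sum.inl uv, Sum.inr (Sum.inr w) => uv.2.1 = w
    | Sum.inr (Sum.inl _), Sum.inr (Sum.inr _) => True
    | _, _ => False)


/-- The degree-3 vertices of `TB(n)`: the vertices `u_{2j-1}, v_{2j-1}`. -/
def TBdeg3 (n : ℕ) : Set (TBVert n) :=
  {v | ∃ q, v = Sum.inl q}

/-- The degree-4 vertices of `TB(n)`: the vertices `z_0, z_2, …, z_{2n}`. -/
def TBdeg4 (n : ℕ) : Set (TBVert n) :=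
  {v | ∃ j, v = Sum.inr j}

section Merge

variable {G : SimpleGraph V} {f : Sym2 V → ℕ} {S : Set V} {P : Set (Set V)} {p : V → W}

lemma merge_eq_of_not_mem (hpart : IsPartitionOn S P) (hp : IsMergeOf P p)
    {v : V} (hv : v ∉ S) {u : V} (h : p u = p v) : u = v := by
  rcases (hp.2 u v).1 h with h' | ⟨B, hB, _, hvB⟩
  · exact h'
  · exact absurd (hpart.1 B hB hvB) hv

lemma merge_eq_iff_mem_block (hpart : IsPartitionOn S P) (hp : IsMergeOf P p)
    {B : Set V} (hB : B ∈ P) {v : V} (hv : v ∈ B) (u : V) :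
    p u = p v ↔ u ∈ B := by
  constructor
  · intro h
    rcases (hp.2 u v).1 h with rfl | ⟨B', hB', huB', hvB'⟩
    · exact hv
    · obtain ⟨B₀, _, huniq⟩ := hpart.2.1 v (hpart.1 B hB hv)
      have h1 : B' = B₀ := huniq B' ⟨hB', hvB'⟩
      have h2 : B = B₀ := huniq B ⟨hB, hv⟩
      rw [h1, ← h2] at huB'
      exact huB'
  · intro h
    exact (hp.2 u v).2 (Or.inr ⟨B, hB, h, hv⟩)

/-- Adjacent vertices with both endpoints in `S` are forbidden. -/
lemma edge_eq_aux (hS : ∀ x ∈ S, ∀ y ∈ S, ¬ G.Adj x y)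
    (hpart : IsPartitionOn S P) (hnc : ∀ B ∈ P, NoCommon G B) (hp : IsMergeOf P p)
    {x y x' y' : V} (hxy : G.Adj x y) (hxy' : G.Adj x' y')
    (h1 : p x = p x') (h2 : p y = p y') : x = x' ∧ y = y' := by
  rcases (hp.2 x x').1 h1 with rfl | ⟨B, hB, hxB, hx'B⟩
  · rcases (hp.2 y y').1 h2 with rfl | ⟨B, hB, hyB, hy'B⟩
    · exact ⟨rfl, rfl⟩
    · by_cases hyy : y = y'
      · exact ⟨rfl, hyy⟩
      · exact absurd ⟨hxy.symm, hxy'.symm⟩ ((hnc B hB y hyB y' hy'B hyy).2 x)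
  · rcases (hp.2 y y').1 h2 with rfl | ⟨B', hB', hyB', hy'B'⟩
    · by_cases hxx : x = x'
      · exact ⟨hxx, rfl⟩
      · exact absurd ⟨hxy, hxy'⟩ ((hnc B hB x hxB x' hx'B hxx).2 y)
    · exact absurd hxy (hS x (hpart.1 B hB hxB) y (hpart.1 B' hB' hyB'))

lemma injOn_map_edge (hS : ∀ x ∈ S, ∀ y ∈ S, ¬ G.Adj x y)
    (hpart : IsPartitionOn S P) (hnc : ∀ B ∈ P, NoCommon G B) (hp : IsMergeOf P p) :
    Set.InjOn (Sym2.map p) G.edgeSet := by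
  intro e he e' he' hmap
  induction e using Sym2.ind with
  | _ x y =>
  induction e' using Sym2.ind with
  | _ x' y' =>
  rw [SimpleGraph.mem_edgeSet] at he he'
  rw [Sym2.map_pair_eq, Sym2.map_pair_eq, Sym2.eq_iff] at hmap
  rcases hmap with ⟨h1, h2⟩ | ⟨h1, h2⟩
  · obtain ⟨rfl, rfl⟩ := edge_eq_aux hS hpart hnc hp he he' h1 h2
    rfl
  · obtain ⟨rfl, rfl⟩ := edge_eq_aux hS hpart hnc hp he he'.symm h1 h2
    exact Sym2.eq_swap

lemma mergeMap_adj {a b : W} :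
    (mergeMap G p).Adj a b ↔ a ≠ b ∧ ∃ x y, G.Adj x y ∧ p x = a ∧ p y = b := by
  constructor
  · rintro ⟨hne, h | ⟨x, y, hxy, hx, hy⟩⟩
    · exact ⟨hne, h⟩
    · exact ⟨hne, y, x, hxy.symm, hy, hx⟩
  · rintro ⟨hne, h⟩
    exact ⟨hne, Or.inl h⟩

lemma mergeMap_edgeSet (hS : ∀ x ∈ S, ∀ y ∈ S, ¬ G.Adj x y)
    (hpart : IsPartitionOn S P) (hp : IsMergeOf P p) :
    (mergeMap G p).edgeSet = Sym2.map p '' G.edgeSet := by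
  ext e
  induction e using Sym2.ind with
  | _ a b =>
  rw [SimpleGraph.mem_edgeSet]
  constructor
  · intro h
    obtain ⟨hne, x, y, hxy, hx, hy⟩ := mergeMap_adj.1 h
    exact ⟨s(x, y), (SimpleGraph.mem_edgeSet G).2 hxy, by rw [Sym2.map_pair_eq, hx, hy]⟩
  · rintro ⟨e', he', hme⟩
    induction e' using Sym2.ind with
    | _ x y =>
    rw [SimpleGraph.mem_edgeSet] at he'
    rw [Sym2.map_pair_eq, Sym2.eq_iff] at hme
    have hne : p x ≠ p y := by
      intro hxyp
      rcases (hp.2 x y).1 hxyp with rfl | ⟨B, hB, hxB, hyB⟩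
      · exact G.irrefl he'
      · exact hS x (hpart.1 B hB hxB) y (hpart.1 B hB hyB) he'
    rcases hme with ⟨h1, h2⟩ | ⟨h1, h2⟩
    · subst h1; subst h2; exact mergeMap_adj.2 ⟨hne, x, y, he', rfl, rfl⟩
    · subst h1; subst h2; exact mergeMap_adj.2 ⟨hne.symm, y, x, he'.symm, rfl, rfl⟩

end Merge

section Push

variable {G : SimpleGraph V} {f : Sym2 V → ℕ} {S : Set V} {P : Set (Set V)} {p : V → W}

open Classical in
/-- Pushforward of the edge labeling along the merge map. -/
noncomputable def pushLabel (G : SimpleGraph V) (f : Sym2 V → ℕ) (p : V → W) :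
    Sym2 W → ℕ :=
  fun eb => if h : ∃ e, e ∈ G.edgeSet ∧ Sym2.map p e = eb then f h.choose else 0

lemma pushLabel_map (hinj : Set.InjOn (Sym2.map p) G.edgeSet)
    {e : Sym2 V} (he : e ∈ G.edgeSet) :
    pushLabel G f p (Sym2.map p e) = f e := by
  have h : ∃ e', e' ∈ G.edgeSet ∧ Sym2.map p e' = Sym2.map p e := ⟨e, he, rfl⟩
  simp only [pushLabel]
  rw [dif_pos h]

  congr 1
  exact hinj h.choose_spec.1 he h.choose_spec.2

lemma pushLabel_bijOn (hS : ∀ x ∈ S, ∀ y ∈ S, ¬ G.Adj x y)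
    (hpart : IsPartitionOn S P) (hnc : ∀ B ∈ P, NoCommon G B) (hp : IsMergeOf P p)
    (hf : Set.BijOn f G.edgeSet (Set.Icc 1 G.edgeSet.ncard)) :
    Set.BijOn (pushLabel G f p) (mergeMap G p).edgeSet
      (Set.Icc 1 (mergeMap G p).edgeSet.ncard) := by
  have hinj := injOn_map_edge hS hpart hnc hp
  have hE := mergeMap_edgeSet hS hpart hp
  have hq : (mergeMap G p).edgeSet.ncard = G.edgeSet.ncard := by
    rw [hE, Set.ncard_image_of_injOn hinj]
  rw [hq, hE]
  refine ⟨?_, ?_, ?_⟩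
  · rintro eb ⟨e, he, rfl⟩
    rw [pushLabel_map hinj he]
    exact hf.1 he
  · rintro eb ⟨e, he, rfl⟩ eb' ⟨e', he', rfl⟩ h
    rw [pushLabel_map hinj he, pushLabel_map hinj he'] at h
    rw [hf.2.1 he he' h]
  · intro y hy
    obtain ⟨e, he, rfl⟩ := hf.2.2 hy
    exact ⟨Sym2.map p e, ⟨e, he, rfl⟩, pushLabel_map hinj he⟩

lemma fplus_push [Finite V] (hS : ∀ x ∈ S, ∀ y ∈ S, ¬ G.Adj x y)
    (hpart : IsPartitionOn S P) (hnc : ∀ B ∈ P, NoCommon G B) (hp : IsMergeOf P p)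
    (v : V) :
    fplus (mergeMap G p) (pushLabel G f p) (p v) =
      ∑ᶠ e ∈ {e ∈ G.edgeSet | ∃ u ∈ e, p u = p v}, f e := by
  have hinj := injOn_map_edge hS hpart hnc hp
  have hE := mergeMap_edgeSet hS hpart hp
  have hset : (mergeMap G p).incidenceSet (p v) =
      Sym2.map p '' {e ∈ G.edgeSet | ∃ u ∈ e, p u = p v} := by
    ext eb
    constructor
    · rintro ⟨heb, hveb⟩
      rw [hE] at heb
      obtain ⟨e, he, rfl⟩ := heb
      obtain ⟨u, hu, hpu⟩ := Sym2.mem_map.1 hveb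
      exact ⟨e, ⟨he, u, hu, hpu⟩, rfl⟩
    · rintro ⟨e, ⟨he, u, hu, hpu⟩, rfl⟩
      exact ⟨hE ▸ ⟨e, he, rfl⟩, Sym2.mem_map.2 ⟨u, hu, hpu⟩⟩
  show (∑ᶠ eb ∈ (mergeMap G p).incidenceSet (p v), pushLabel G f p eb) = _
  rw [hset, finsum_mem_image (hinj.mono (fun e he => he.1))]
  exact finsum_mem_congr rfl (fun e he => pushLabel_map hinj he.1)

lemma fplus_push_of_not_mem [Finite V] (hS : ∀ x ∈ S, ∀ y ∈ S, ¬ G.Adj x y)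
    (hpart : IsPartitionOn S P) (hnc : ∀ B ∈ P, NoCommon G B) (hp : IsMergeOf P p)
    {v : V} (hv : v ∉ S) :
    fplus (mergeMap G p) (pushLabel G f p) (p v) = fplus G f v := by
  rw [fplus_push hS hpart hnc hp v]
  have hset2 : {e ∈ G.edgeSet | ∃ u ∈ e, p u = p v} = G.incidenceSet v := by
    ext e
    constructor
    · rintro ⟨he, u, hu, hpu⟩
      obtain rfl := merge_eq_of_not_mem hpart hp hv hpu
      exact ⟨he, hu⟩
    · rintro ⟨he, hv'⟩
      exact ⟨he, v, hv', rfl⟩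
  rw [hset2]
  rfl

lemma fplus_push_of_mem_block [Finite V] (hS : ∀ x ∈ S, ∀ y ∈ S, ¬ G.Adj x y)
    (hpart : IsPartitionOn S P) (hnc : ∀ B ∈ P, NoCommon G B) (hp : IsMergeOf P p)
    {B : Set V} (hB : B ∈ P) {v : V} (hv : v ∈ B) :
    fplus (mergeMap G p) (pushLabel G f p) (p v) = ∑ᶠ u ∈ B, fplus G f u := by
  rw [fplus_push hS hpart hnc hp v]
  have hset : {e ∈ G.edgeSet | ∃ u ∈ e, p u = p v} = ⋃ u ∈ B, G.incidenceSet u := by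
    ext e
    simp only [Set.mem_iUnion, Set.mem_setOf_eq]
    constructor
    · rintro ⟨he, u, hu, hpu⟩
      exact ⟨u, (merge_eq_iff_mem_block hpart hp hB hv u).1 hpu, he, hu⟩
    · rintro ⟨u, huB, he, hu⟩
      exact ⟨he, u, hu, (merge_eq_iff_mem_block hpart hp hB hv u).2 huB⟩
  rw [hset]
  have hdisj : B.PairwiseDisjoint (fun u => G.incidenceSet u) := by
    intro u hu u' hu' hne
    rw [Function.onFun, Set.disjoint_left]
    rintro e ⟨he, hue⟩ ⟨_, hu'e⟩
    have : e = s(u, u') := (Sym2.mem_and_mem_iff hne).1 ⟨hue, hu'e⟩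
    subst this
    exact hS u (hpart.1 B hB hu) u' (hpart.1 B hB hu')
      ((SimpleGraph.mem_edgeSet G).1 he)
  rw [finsum_mem_biUnion hdisj (Set.toFinite B) (fun u _ => Set.toFinite _)]
  rfl

lemma finsum_mem_const_nat [Finite V] {B : Set V} (t : ℕ) :
    ∑ᶠ _u ∈ B, t = B.ncard * t := by
  have hfin : B.Finite := Set.toFinite B
  rw [← hfin.coe_toFinset, finsum_mem_coe_finset, Finset.sum_const,
    smul_eq_mul, ← Set.ncard_coe_finset, hfin.coe_toFinset]

end Push

/-- `TB^i(r_i, n)`: given a local antimagic labeling of `TB(n)` (with `n = 2k`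
even) whose induced labels are `20k+12` on all degree-4 vertices and
`9k+6` or `21k+12` on the degree-3 vertices, with exactly `n+1` degree-3
vertices of each label, merging the degree-3 vertices of one of these two
labels `t` along a partition into `r` blocks of size `s` (with `r, s ≥ 3` both
odd, `rs = n+1`, blocks independent without common neighbors) gives a graph
with `χ_{la} = 3`. -/
theorem chiLA_TB_merge_deg3 (n k : ℕ) (hn : n = 2 * k) (hk : 1 ≤ k)
    (f : Sym2 (TBVert n) → ℕ) (hf : IsLocalAntimagic (TB n) f)
    (hdeg4 : ∀ v ∈ TBdeg4 n, fplus (TB n) f v = 20 * k + 12)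
    (hdeg3 : ∀ v ∈ TBdeg3 n,
      fplus (TB n) f v = 9 * k + 6 ∨ fplus (TB n) f v = 21 * k + 12)
    (hcount1 : {v ∈ TBdeg3 n | fplus (TB n) f v = 9 * k + 6}.ncard = n + 1)
    (hcount2 : {v ∈ TBdeg3 n | fplus (TB n) f v = 21 * k + 12}.ncard = n + 1)
    (t : ℕ) (ht : t = 9 * k + 6 ∨ t = 21 * k + 12)
    (r s : ℕ) (hrodd : Odd r) (hsodd : Odd s) (hr : 3 ≤ r) (hs : 3 ≤ s)
    (hrs : r * s = n + 1)
    (P : Set (Set (TBVert n)))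
    (hpart : IsPartitionOn {v ∈ TBdeg3 n | fplus (TB n) f v = t} P)
    (hPcard : P.ncard = r) (hBcard : ∀ B ∈ P, B.ncard = s)
    (hnc : ∀ B ∈ P, NoCommon (TB n) B)
    (W : Type*) (p : TBVert n → W) (hp : IsMergeOf P p) :
    chiLA (mergeMap (TB n) p) = 3 := by
  classical
  set S : Set (TBVert n) := {v ∈ TBdeg3 n | fplus (TB n) f v = t} with hSdef
  have hSmem : ∀ v, v ∈ S ↔ (v ∈ TBdeg3 n ∧ fplus (TB n) f v = t) := fun v => by
    rw [hSdef]; exact Iff.rfl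
  have hS : ∀ x ∈ S, ∀ y ∈ S, ¬ (TB n).Adj x y := by
    intro x hx y hy hadj
    exact hf.2 hadj (by rw [((hSmem x).1 hx).2, ((hSmem y).1 hy).2])
  -- basic adjacency facts in TB n
  have hadj_uv : ∀ (j : Fin (n+1)),
      (TB n).Adj (Sum.inl (j, 0)) (Sum.inl (j, 1)) := by
    intro j
    rw [TB, SimpleGraph.fromRel_adj]
    exact ⟨by simp [Prod.ext_iff], Or.inl ⟨rfl, rfl, rfl⟩⟩
  have hadj_zu : ∀ (j : Fin (n+1)) (i : Fin 2),
      (TB n).Adj (Sum.inr j) (Sum.inl (j, i)) := by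
    intro j i
    rw [TB, SimpleGraph.fromRel_adj]
    exact ⟨by simp, Or.inl (Or.inl rfl)⟩
  have hnoadj_zz : ∀ (i j : Fin (n+1)), ¬ (TB n).Adj (Sum.inr i) (Sum.inr j) := by
    intro i j h
    rw [TB, SimpleGraph.fromRel_adj] at h
    rcases h.2 with h' | h' <;> exact h'
  have hinr_not_S : ∀ (j : Fin (n+1)), Sum.inr j ∉ S := by
    intro j hj
    obtain ⟨q, hq⟩ := ((hSmem _).1 hj).1
    exact absurd hq (by simp)
  -- the other degree-3 value t'
  obtain ⟨t', hval, ht'A, htt', ht'ne, hAlt, ht'lt⟩ :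
      ∃ t', (∀ q, fplus (TB n) f (Sum.inl q) = t ∨ fplus (TB n) f (Sum.inl q) = t')
      ∧ t' ≠ 20*k+12 ∧ t ≠ t'
      ∧ {v ∈ TBdeg3 n | fplus (TB n) f v = t'}.Nonempty
      ∧ 20*k+12 < 3*t ∧ t' < 3*t := by
    rcases ht with rfl | rfl
    · refine ⟨21*k+12, fun q => hdeg3 _ ⟨q, rfl⟩, by omega, by omega, ?_, by omega, by omega⟩
      exact Set.nonempty_of_ncard_ne_zero (by rw [hcount2]; omega)
    · refine ⟨9*k+6, ?_, by omega, by omega, ?_, by omega, by omega⟩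
      · intro q
        rcases hdeg3 _ ⟨q, rfl⟩ with h | h
        exacts [Or.inr h, Or.inl h]
      · exact Set.nonempty_of_ncard_ne_zero (by rw [hcount1]; omega)
  have hst3 : 3*t ≤ s*t := Nat.mul_le_mul_right t hs
  have hstA : s*t ≠ 20*k+12 := by omega
  have hstt' : s*t ≠ t' := by omega
  have hA_ne_t' : (20*k+12 : ℕ) ≠ t' := fun h => ht'A h.symm
  -- the pushforward labeling
  set M := mergeMap (TB n) p with hM
  set g := pushLabel (TB n) f p with hg
  have hA : ∀ j : Fin (n+1), fplus M g (p (Sum.inr j)) = 20*k+12 := by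
    intro j
    rw [hM, hg, fplus_push_of_not_mem hS hpart hnc hp (hinr_not_S j)]
    exact hdeg4 _ ⟨j, rfl⟩
  have hB3 : ∀ q, Sum.inl q ∉ S → fplus M g (p (Sum.inl q)) = t' := by
    intro q hq
    rw [hM, hg, fplus_push_of_not_mem hS hpart hnc hp hq]
    rcases hval q with h | h
    · exact absurd ((hSmem _).2 ⟨⟨q, rfl⟩, h⟩) hq
    · exact h
  have hC : ∀ v ∈ S, fplus M g (p v) = s * t := by
    intro v hv
    obtain ⟨B, ⟨hB, hvB⟩, -⟩ := hpart.2.1 v hv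
    rw [hM, hg, fplus_push_of_mem_block hS hpart hnc hp hB hvB]
    have hconst : ∀ u ∈ B, fplus (TB n) f u = t := fun u hu =>
      ((hSmem u).1 (hpart.1 B hB hu)).2
    calc ∑ᶠ u ∈ B, fplus (TB n) f u = ∑ᶠ _u ∈ B, t := finsum_mem_congr rfl hconst
      _ = B.ncard * t := finsum_mem_const_nat t
      _ = s * t := by rw [hBcard B hB]
  -- local antimagic property of g
  have hanti : ∀ ⦃a b : W⦄, M.Adj a b → fplus M g a ≠ fplus M g b := by
    intro a b hab
    obtain ⟨hne, x, y, hxy, rfl, rfl⟩ := mergeMap_adj.1 hab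
    rcases x with q | i <;> rcases y with q' | j
    · -- both degree 3
      have hne' := hf.2 hxy
      by_cases h1 : Sum.inl q ∈ S <;> by_cases h2 : Sum.inl q' ∈ S
      · exact absurd (((hSmem _).1 h1).2.trans (((hSmem _).1 h2).2).symm) hne'
      · rw [hC _ h1, hB3 _ h2]; exact hstt'
      · rw [hB3 _ h1, hC _ h2]; exact fun h => hstt' h.symm
      · have ha : fplus (TB n) f (Sum.inl q) = t' := by
          rcases hval q with h | h
          · exact absurd ((hSmem _).2 ⟨⟨q, rfl⟩, h⟩) h1
          · exact h
        have hb : fplus (TB n) f (Sum.inl q') = t' := by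
          rcases hval q' with h | h
          · exact absurd ((hSmem _).2 ⟨⟨q', rfl⟩, h⟩) h2
          · exact h
        exact absurd (ha.trans hb.symm) hne'
    · -- deg 3, deg 4
      rw [hA j]
      by_cases hqS : Sum.inl q ∈ S
      · rw [hC _ hqS]; exact hstA
      · rw [hB3 q hqS]; exact ht'A
    · -- deg 4, deg 3
      rw [hA i]
      by_cases hqS : Sum.inl q' ∈ S
      · rw [hC _ hqS]; exact fun h => hstA h.symm
      · rw [hB3 q' hqS]; exact hA_ne_t'
    · exact absurd hxy (hnoadj_zz i j)
  -- the range of induced labels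
  have hrange : Set.range (fplus M g) = {20*k+12, t', s*t} := by
    ext y
    constructor
    · rintro ⟨w, rfl⟩
      obtain ⟨v, rfl⟩ := hp.1 w
      rcases v with q | j
      · by_cases hqS : Sum.inl q ∈ S
        · rw [hC _ hqS]
          exact Or.inr (Or.inr rfl)
        · rw [hB3 q hqS]
          exact Or.inr (Or.inl rfl)
      · rw [hA j]
        exact Or.inl rfl
    · intro hy
      rcases hy with rfl | rfl | rfl
      · exact ⟨p (Sum.inr ⟨0, Nat.succ_pos n⟩), hA _⟩
      · obtain ⟨v, hv3, hvt'⟩ := ht'ne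
        obtain ⟨q, rfl⟩ := hv3
        refine ⟨p (Sum.inl q), hB3 q ?_⟩
        intro hqS
        exact htt' ((((hSmem _).1 hqS).2).symm.trans hvt')
      · obtain ⟨B, hB⟩ := Set.nonempty_of_ncard_ne_zero (s := P) (by rw [hPcard]; omega)
        obtain ⟨v, hvB⟩ := hpart.2.2 B hB
        exact ⟨p v, hC v (hpart.1 B hB hvB)⟩
  have hncard3 : (Set.range (fplus M g)).ncard = 3 := by
    rw [hrange]
    exact Set.ncard_eq_three.2 ⟨_, _, _, hA_ne_t', fun h => hstA h.symm,
      fun h => hstt' h.symm, rfl⟩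
  have hmem : 3 ∈ {c : ℕ | ∃ f' : Sym2 W → ℕ,
      IsLocalAntimagic M f' ∧ (Set.range (fplus M f')).ncard = c} :=
    ⟨g, ⟨by rw [hg, hM]; exact pushLabel_bijOn hS hpart hnc hp hf.1, hanti⟩, hncard3⟩
  -- lower bound : any local antimagic labeling has at least 3 values
  have hW : Finite W := Finite.of_surjective p hp.1
  have hlb : ∀ c ∈ {c : ℕ | ∃ f' : Sym2 W → ℕ,
      IsLocalAntimagic M f' ∧ (Set.range (fplus M f')).ncard = c}, 3 ≤ c := by
    rintro c ⟨g', ⟨-, hg2⟩, rfl⟩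
    obtain ⟨B, hB⟩ := Set.nonempty_of_ncard_ne_zero (s := P) (by rw [hPcard]; omega)
    obtain ⟨v₀, hv₀B⟩ := hpart.2.2 B hB
    have hv₀S : v₀ ∈ S := hpart.1 B hB hv₀B
    obtain ⟨⟨j, i⟩, rfl⟩ := ((hSmem _).1 hv₀S).1
    obtain ⟨i', hii', hadjvw⟩ :
        ∃ i', i ≠ i' ∧ (TB n).Adj (Sum.inl (j, i)) (Sum.inl (j, i')) := by
      fin_cases i
      · exact ⟨1, by decide, hadj_uv j⟩
      · exact ⟨0, by decide, (hadj_uv j).symm⟩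
    have hwS : Sum.inl (j, i') ∉ S := by
      intro hw
      exact hf.2 hadjvw ((((hSmem _).1 hv₀S).2).trans ((((hSmem _).1 hw).2)).symm)
    have hzS : Sum.inr j ∉ S := hinr_not_S j
    have d1 : p (Sum.inl (j, i)) ≠ p (Sum.inl (j, i')) := by
      intro h
      have h2 := merge_eq_of_not_mem hpart hp hwS h
      have h3 : ((j, i) : Fin (n+1) × Fin 2) = (j, i') := Sum.inl.inj h2
      exact hii' (congrArg Prod.snd h3)
    have d2 : p (Sum.inl (j, i)) ≠ p (Sum.inr j) := by
      intro h
      exact absurd (merge_eq_of_not_mem hpart hp hzS h) (by simp)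
    have d3 : p (Sum.inl (j, i')) ≠ p (Sum.inr j) := by
      intro h
      exact absurd (merge_eq_of_not_mem hpart hp hzS h) (by simp)
    have m1 : M.Adj (p (Sum.inl (j, i))) (p (Sum.inl (j, i'))) :=
      mergeMap_adj.2 ⟨d1, _, _, hadjvw, rfl, rfl⟩
    have m2 : M.Adj (p (Sum.inl (j, i))) (p (Sum.inr j)) :=
      mergeMap_adj.2 ⟨d2, _, _, (hadj_zu j i).symm, rfl, rfl⟩
    have m3 : M.Adj (p (Sum.inl (j, i'))) (p (Sum.inr j)) :=
      mergeMap_adj.2 ⟨d3, _, _, (hadj_zu j i').symm, rfl, rfl⟩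
    have hsub : ({fplus M g' (p (Sum.inl (j, i))), fplus M g' (p (Sum.inl (j, i'))),
        fplus M g' (p (Sum.inr j))} : Set ℕ) ⊆ Set.range (fplus M g') := by
      rintro y (rfl | rfl | rfl)
      exacts [⟨_, rfl⟩, ⟨_, rfl⟩, ⟨_, rfl⟩]
    have h3card : ({fplus M g' (p (Sum.inl (j, i))), fplus M g' (p (Sum.inl (j, i'))),
        fplus M g' (p (Sum.inr j))} : Set ℕ).ncard = 3 :=
      Set.ncard_eq_three.2 ⟨_, _, _, hg2 m1, hg2 m2, hg2 m3, rfl⟩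
    calc (3:ℕ) = _ := h3card.symm
      _ ≤ (Set.range (fplus M g')).ncard := Set.ncard_le_ncard hsub (Set.toFinite _)
  unfold chiLA
  exact le_antisymm (Nat.sInf_le hmem) (le_csInf ⟨3, hmem⟩ hlb)


end LocalAntimagic
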